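/- Let G = (V, E, ε) be a loopless multigraph and D an orientation of G with in-degree function ρ_D. Then D is a decreasingly minimal orientation of G (i.e., ρ_D ≤_dec ρ_{D′} for every orientation D′ of G) if and only if there exist no vertices s, t ∈ V such that t is reachable from s in D and ρ_D(t) ≥ ρ_D(s) + 2. -/

import Mathlib

open Finset

/-- An orientation of a multigraph `(V, E, ε)`: each edge `e` gets a tail and a
head whose unordered pair is `ε e`. -/
structure GraphOrientation (V : Type*) (E : Type*) (ε : E → Sym2 V) where
  tail : E → V
  head : E → V
  compat : ∀ e : E, ε e = s(tail e, head e)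

/-- The in-degree (as an integer) of a vertex in an orientation. -/
def indeg {V E : Type*} [Fintype E] [DecidableEq V] {ε : E → Sym2 V}
    (D : GraphOrientation V E ε) (v : V) : ℤ :=
  ((Finset.univ.filter (fun e => D.head e = v)).card : ℤ)

/-- `Reach D s t`: `t` is reachable from `s` in the orientation `D`. -/
def Reach {V E : Type*} {ε : E → Sym2 V} (D : GraphOrientation V E ε) : V → V → Prop :=
  Relation.ReflTransGen (fun u v => ∃ e : E, D.tail e = u ∧ D.head e = v)

/-- `x↓`: the values of `x` arranged in nonincreasing order. -/
def sortedDesc {V : Type*} [Fintype V] (x : V → ℤ) : List ℤ :=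
  ((Finset.univ.val.map x).sort (· ≤ ·)).reverse

/-- `x ≤_dec y`: `x↓` is lexicographically less than or equal to `y↓`. -/
def DecLE {V : Type*} [Fintype V] (x y : V → ℤ) : Prop :=
  sortedDesc x = sortedDesc y ∨ List.Lex (· < ·) (sortedDesc x) (sortedDesc y)

/-! ### Auxiliary lemmas about `sortedDesc` and lexicographic order -/

lemma count_sortedDesc {V : Type*} [Fintype V] (x : V → ℤ) (w : ℤ) :
    (sortedDesc x).count w = (Finset.univ.filter (fun a => x a = w)).card := by
  rw [sortedDesc, List.count_reverse, ← Multiset.coe_count, Multiset.sort_eq,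
    Multiset.count_map]
  rw [show (Finset.filter (fun a => x a = w) Finset.univ).card
      = Multiset.card (Multiset.filter (fun a => x a = w) Finset.univ.val) from rfl]
  congr 1
  exact Multiset.filter_congr (fun a _ => eq_comm)

lemma length_sortedDesc {V : Type*} [Fintype V] (x : V → ℤ) :
    (sortedDesc x).length = Fintype.card V := by
  simp [sortedDesc, Multiset.length_sort]

lemma sorted_sortedDesc {V : Type*} [Fintype V] (x : V → ℤ) :
    (sortedDesc x).Pairwise (fun a b => b ≤ a) := by
  rw [sortedDesc, List.pairwise_reverse]
  exact Multiset.pairwise_sort _ _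

lemma sortedDesc_comp_perm {V : Type*} [Fintype V] (x : V → ℤ) (σ : Equiv.Perm V) :
    sortedDesc (x ∘ σ) = sortedDesc x := by
  unfold sortedDesc
  congr 1
  rw [← Multiset.map_map]
  congr 1
  have h : Finset.univ.val.map ⇑σ = (Finset.univ.map σ.toEmbedding).val := by
    rw [Finset.map_val]
    rfl
  rw [h, Finset.map_univ_equiv]

lemma lex_of_counts : ∀ (lA lB : List ℤ), lA.length = lB.length →
    lA.Pairwise (fun a b => b ≤ a) → lB.Pairwise (fun a b => b ≤ a) →
    ∀ v : ℤ, lA.count v < lB.count v → (∀ w, v < w → lA.count w = lB.count w) →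
    List.Lex (· < ·) lA lB
  | [], [], _, _, _, v, hc, _ => by simp at hc
  | [], b :: bs, hl, _, _, _, _, _ => by simp at hl
  | a :: as, [], hl, _, _, _, _, _ => by simp at hl
  | a :: as, b :: bs, hl, hA, hB, v, hc, hw => by
    have hAle : ∀ z ∈ a :: as, z ≤ a := by
      intro z hz
      rcases List.mem_cons.1 hz with h | h
      · exact le_of_eq h
      · exact (List.pairwise_cons.1 hA).1 z h
    have hBle : ∀ z ∈ b :: bs, z ≤ b := by
      intro z hz
      rcases List.mem_cons.1 hz with h | h
      · exact le_of_eq (by rw [h])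
      · exact (List.pairwise_cons.1 hB).1 z h
    rcases lt_trichotomy a b with h | h | h
    · exact List.Lex.rel h
    · subst h
      apply List.Lex.cons
      have hlen : as.length = bs.length := by simpa using hl
      refine lex_of_counts as bs hlen (List.Pairwise.of_cons hA) (List.Pairwise.of_cons hB) v ?_ ?_
      · have := hc
        rw [List.count_cons, List.count_cons] at this
        omega
      · intro w hvw
        have := hw w hvw
        rw [List.count_cons, List.count_cons] at this
        omega
    · exfalso
      rcases le_or_gt a v with hav | hva
      · have hvB : v ∈ b :: bs := by
          have : 0 < (b :: bs).count v := lt_of_le_of_lt (Nat.zero_le _) hc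
          exact List.count_pos_iff.1 this
        have := hBle v hvB
        omega
      · have hca : (a :: as).count a = (b :: bs).count a := hw a hva
        have haA : 0 < (a :: as).count a := List.count_pos_iff.2 List.mem_cons_self
        have haB : a ∈ b :: bs := List.count_pos_iff.1 (hca ▸ haA)
        have := hBle a haB
        omega

lemma card_filter_split {V : Type*} [Fintype V] [DecidableEq V] (y : V → ℤ) (w : ℤ)
    (p q : V) (hpq : p ≠ q) :
    ((Finset.univ.filter (fun a => y a = w)).card : ℤ) =
      ∑ a ∈ (Finset.univ.erase p).erase q, (if y a = w then (1:ℤ) else 0)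
        + (if y p = w then 1 else 0) + (if y q = w then 1 else 0) := by
  have h1 : ((Finset.univ.filter (fun a => y a = w)).card : ℤ)
      = ∑ a : V, (if y a = w then (1:ℤ) else 0) := by
    rw [Finset.card_filter]; push_cast; rfl
  rw [h1, ← Finset.sum_erase_add _ _ (Finset.mem_univ p),
    ← Finset.sum_erase_add _ _ (Finset.mem_erase.2 ⟨hpq.symm, Finset.mem_univ q⟩)]
  ring

lemma count_exch {V : Type*} [Fintype V] [DecidableEq V] {x x' : V → ℤ} {p q : V}
    (hpq : p ≠ q)
    (hx' : ∀ v, x' v = x v + (if v = p then 1 else 0) - (if v = q then 1 else 0))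
    (w : ℤ) :
    ((sortedDesc x').count w : ℤ) - (sortedDesc x).count w =
      (if x p + 1 = w then (1:ℤ) else 0) + (if x q - 1 = w then 1 else 0)
        - (if x p = w then 1 else 0) - (if x q = w then 1 else 0) := by
  rw [count_sortedDesc, count_sortedDesc, card_filter_split x' w p q hpq,
    card_filter_split x w p q hpq]
  have hsum : ∑ a ∈ (Finset.univ.erase p).erase q, (if x' a = w then (1:ℤ) else 0)
      = ∑ a ∈ (Finset.univ.erase p).erase q, (if x a = w then (1:ℤ) else 0) := by
    apply Finset.sum_congr rfl
    intro a ha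
    have hap : a ≠ p := Finset.ne_of_mem_erase (Finset.mem_of_mem_erase ha)
    have haq : a ≠ q := Finset.ne_of_mem_erase ha
    rw [hx' a, if_neg hap, if_neg haq]
    ring_nf
  have hp : x' p = x p + 1 := by rw [hx' p, if_pos rfl, if_neg hpq]; ring
  have hq : x' q = x q - 1 := by rw [hx' q, if_neg hpq.symm, if_pos rfl]; ring
  rw [hsum, hp, hq]
  ring

lemma exch_lex {V : Type*} [Fintype V] [DecidableEq V] {x x' : V → ℤ} {p q : V}
    (hpq : p ≠ q)
    (hx' : ∀ v, x' v = x v + (if v = p then 1 else 0) - (if v = q then 1 else 0))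
    (h2 : x p + 2 ≤ x q) :
    List.Lex (· < ·) (sortedDesc x') (sortedDesc x) := by
  apply lex_of_counts _ _ (by rw [length_sortedDesc, length_sortedDesc])
    (sorted_sortedDesc x') (sorted_sortedDesc x) (x q)
  · have := count_exch hpq hx' (x q)
    rw [if_neg (by omega), if_neg (by omega), if_neg (by omega), if_pos rfl] at this
    omega
  · intro w hw
    have := count_exch hpq hx' w
    rw [if_neg (by omega), if_neg (by omega), if_neg (by omega), if_neg (by omega)] at this
    omega

lemma decLE_trans {V : Type*} [Fintype V] {x y z : V → ℤ} (h1 : DecLE x y) (h2 : DecLE y z) :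
    DecLE x z := by
  rcases h1 with h1 | h1 <;> rcases h2 with h2 | h2
  · exact Or.inl (h1.trans h2)
  · exact Or.inr (h1 ▸ h2)
  · exact Or.inr (h2 ▸ h1)
  · exact Or.inr (List.lex_trans (fun h₁ h₂ => lt_trans h₁ h₂) h1 h2)

/-! ### Trails -/

section Trail
variable {V E : Type*}

/-- A walk along edges: consecutive tails/heads match. -/
def IsTrail (T H : E → V) : V → List E → Prop
  | _, [] => True
  | s, e :: L => T e = s ∧ IsTrail T H (H e) L

def endOf (H : E → V) (s : V) (L : List E) : V := L.foldl (fun _ e => H e) s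

@[simp] lemma endOf_nil (H : E → V) (s : V) : endOf H s [] = s := rfl
@[simp] lemma endOf_cons (H : E → V) (s : V) (e : E) (L : List E) :
    endOf H s (e :: L) = endOf H (H e) L := rfl
lemma endOf_append (H : E → V) (s : V) (A B : List E) :
    endOf H s (A ++ B) = endOf H (endOf H s A) B := by
  simp [endOf, List.foldl_append]

lemma isTrail_append {T H : E → V} : ∀ (A B : List E) (s : V),
    IsTrail T H s (A ++ B) ↔ IsTrail T H s A ∧ IsTrail T H (endOf H s A) B
  | [], B, s => by simp [IsTrail]
  | e :: A, B, s => by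
    show IsTrail T H s (e :: (A ++ B)) ↔ _
    rw [show IsTrail T H s (e :: (A ++ B)) = (T e = s ∧ IsTrail T H (H e) (A ++ B)) from rfl,
      isTrail_append A B (H e)]
    simp only [IsTrail, endOf_cons]
    tauto

lemma exists_trail {r : V → V → Prop} {P : E → Prop} {T H : E → V}
    (hr : ∀ u v, r u v → ∃ e, P e ∧ T e = u ∧ H e = v) {s t : V}
    (h : Relation.ReflTransGen r s t) :
    ∃ L : List E, IsTrail T H s L ∧ endOf H s L = t ∧ ∀ e ∈ L, P e := by
  induction h using Relation.ReflTransGen.head_induction_on with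
  | refl => exact ⟨[], trivial, rfl, by simp⟩
  | head hab _ ih =>
    obtain ⟨e, hPe, hTe, hHe⟩ := hr _ _ hab
    obtain ⟨L, hL1, hL2, hL3⟩ := ih
    refine ⟨e :: L, ⟨hTe, ?_⟩, ?_, ?_⟩
    · rw [hHe]; exact hL1
    · rw [endOf_cons, hHe]; exact hL2
    · intro f hf
      rcases List.mem_cons.1 hf with h | h
      · exact h ▸ hPe
      · exact hL3 f h

lemma split_dup {L : List E} (h : ¬ L.Nodup) :
    ∃ (A : List E) (e : E) (B : List E), L = A ++ e :: B ∧ e ∈ B := by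
  induction L with
  | nil => exact absurd List.nodup_nil h
  | cons x xs ih =>
    by_cases hx : x ∈ xs
    · exact ⟨[], x, xs, rfl, hx⟩
    · have : ¬ xs.Nodup := fun hn => h (List.nodup_cons.2 ⟨hx, hn⟩)
      obtain ⟨A, e, B, hAB, heB⟩ := ih this
      exact ⟨x :: A, e, B, by rw [hAB]; rfl, heB⟩

lemma exists_nodup_trail {T H : E → V} {P : E → Prop} :
    ∀ (n : ℕ) (L : List E), L.length ≤ n → ∀ (s : V), IsTrail T H s L → (∀ e ∈ L, P e) →
    ∃ L' : List E, L'.Nodup ∧ IsTrail T H s L' ∧ endOf H s L' = endOf H s L ∧ ∀ e ∈ L', P e := by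
  intro n
  induction n with
  | zero =>
    intro L hlen s h1 h2
    have : L = [] := List.length_eq_zero_iff.1 (Nat.le_zero.1 hlen)
    exact ⟨L, this ▸ List.nodup_nil, h1, rfl, h2⟩
  | succ n ih =>
    intro L hlen s h1 h2
    by_cases hN : L.Nodup
    · exact ⟨L, hN, h1, rfl, h2⟩
    · obtain ⟨A, e, B, rfl, heB⟩ := split_dup hN
      obtain ⟨B1, B2, rfl⟩ := List.append_of_mem heB
      have h1' : IsTrail T H s (A ++ e :: B2) ∧
          endOf H s (A ++ e :: B2) = endOf H s (A ++ e :: (B1 ++ e :: B2)) := by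
        rw [isTrail_append] at h1 ⊢
        obtain ⟨hA, hTe, hrest⟩ := h1
        rw [show (B1 ++ e :: B2 : List E) = (B1 ++ [e]) ++ B2 by simp] at hrest
        rw [isTrail_append] at hrest
        obtain ⟨hB1e, hB2⟩ := hrest
        rw [isTrail_append] at hB1e
        obtain ⟨hB1, hTe2, _⟩ := hB1e
        have hEnd : endOf H (H e) ((B1 ++ [e]) ++ B2) = endOf H (H e) B2 := by
          rw [endOf_append, endOf_append]
          simp
        have hfix : endOf H (H e) (B1 ++ [e]) = H e := by
          rw [endOf_append]; rfl
        rw [hfix] at hB2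
        constructor
        · exact ⟨hA, hTe, hB2⟩
        · rw [endOf_append, endOf_append]
          simp only [endOf_cons]
          rw [show (B1 ++ e :: B2 : List E) = (B1 ++ [e]) ++ B2 by simp, hEnd]
      have hlen' : (A ++ e :: B2).length ≤ n := by
        simp only [List.length_append, List.length_cons] at hlen ⊢
        omega
      obtain ⟨L', hn, ht, he, hp⟩ := ih (A ++ e :: B2) hlen' s h1'.1
        (fun f hf => h2 f (by
          simp only [List.mem_append, List.mem_cons] at hf ⊢
          tauto))
      exact ⟨L', hn, ht, he.trans h1'.2, fun f hf => hp f hf⟩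

end Trail

/-! ### Flipping edges of an orientation -/

section Flip
variable {V E : Type*} {ε : E → Sym2 V}

open Classical in
/-- Flip the orientation of the edges in `L`. -/
noncomputable def flipO (D0 : GraphOrientation V E ε) (L : List E) : GraphOrientation V E ε where
  tail e := if e ∈ L then D0.head e else D0.tail e
  head e := if e ∈ L then D0.tail e else D0.head e
  compat e := by
    by_cases h : e ∈ L <;> simp only [h, if_pos, if_neg, if_true, if_false, D0.compat e]
    exact Sym2.eq_swap

open Classical in
lemma indeg_flip [Fintype E] [DecidableEq V] (D0 : GraphOrientation V E ε)
    (L : List E) (hN : L.Nodup) (v : V) :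
    indeg (flipO D0 L) v = indeg D0 v
      + ((L.filter (fun e => D0.tail e = v)).length : ℤ)
      - ((L.filter (fun e => D0.head e = v)).length : ℤ) := by
  classical
  have hsplit : ∀ y : E → V,
      (Finset.univ.filter (fun e => (if e ∈ L then D0.tail e else y e) = v)).card
      = (Finset.univ.filter (fun e => e ∈ L ∧ D0.tail e = v)).card
        + (Finset.univ.filter (fun e => e ∉ L ∧ y e = v)).card := by
    intro y
    rw [← Finset.card_union_of_disjoint]
    · congr 1
      ext e
      by_cases h : e ∈ L <;> simp [h]
    · rw [Finset.disjoint_filter]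
      intro e _ he
      simp [he.1]
  have hLcount : ∀ y : E → V, (Finset.univ.filter (fun e => e ∈ L ∧ y e = v)).card
      = (L.filter (fun e => y e = v)).length := by
    intro y
    rw [← List.toFinset_card_of_nodup (List.Nodup.filter _ hN)]
    congr 1
    ext e
    simp [List.mem_filter, and_comm]
  have hd : ∀ e : E, (flipO D0 L).head e = if e ∈ L then D0.tail e else D0.head e := fun e => rfl
  have h0 : indeg D0 v = ((Finset.univ.filter (fun e => e ∈ L ∧ D0.head e = v)).card : ℤ)
      + (Finset.univ.filter (fun e => e ∉ L ∧ D0.head e = v)).card := by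
    rw [indeg]
    norm_cast
    rw [← Finset.card_union_of_disjoint]
    · congr 1
      ext e
      by_cases h : e ∈ L <;> simp [h]
    · rw [Finset.disjoint_filter]
      intro e _ he
      simp [he.1]
  rw [indeg]
  simp only [hd]
  rw [hsplit D0.head, h0]
  rw [hLcount D0.tail, hLcount D0.head]
  push_cast
  ring

lemma trail_count [DecidableEq V] {T H : E → V} :
    ∀ (L : List E) (s : V), IsTrail T H s L → ∀ v : V,
    ((L.filter (fun e => T e = v)).length : ℤ) - ((L.filter (fun e => H e = v)).length : ℤ)
      = (if s = v then 1 else 0) - (if endOf H s L = v then 1 else 0)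
  | [], s, _, v => by simp; split_ifs <;> simp_all
  | e :: L, s, h, v => by
    obtain ⟨hTe, hL⟩ := h
    have ih := trail_count L (H e) hL v
    subst hTe
    simp only [List.filter_cons, endOf_cons]
    by_cases h1 : T e = v <;> by_cases h2 : H e = v <;>
      by_cases h3 : endOf H (H e) L = v <;>
      simp [h1, h2, h3] at ih ⊢ <;> omega

end Flip

/-! ### Counting helpers -/

lemma sum_indeg {V E : Type*} [Fintype V] [Fintype E] [DecidableEq V] {ε : E → Sym2 V}
    (D0 : GraphOrientation V E ε) :
    ∑ v : V, indeg D0 v = (Fintype.card E : ℤ) := by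
  unfold indeg
  rw [← Nat.cast_sum]
  congr 1
  rw [← Finset.card_eq_sum_card_fiberwise (f := D0.head) (t := Finset.univ)
    (fun x _ => Finset.mem_univ _)]
  rfl

lemma sum_card_fiber {E V : Type*} [Fintype E] [DecidableEq V] (P : E → Prop)
    [DecidablePred P] (f : E → V) (R : Finset V) :
    ∑ u ∈ R, (Finset.univ.filter (fun e => P e ∧ f e = u)).card
      = (Finset.univ.filter (fun e => P e ∧ f e ∈ R)).card := by
  rw [Finset.card_eq_sum_card_fiberwise (f := f) (t := R)
    (fun e he => (Finset.mem_filter.1 he).2.2)]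
  apply Finset.sum_congr rfl
  intro u hu
  congr 1
  ext e
  simp only [Finset.mem_filter, Finset.mem_univ, true_and, and_assoc]
  constructor
  · rintro ⟨hP, hfe⟩
    exact ⟨hP, hfe ▸ hu, hfe⟩
  · rintro ⟨hP, _, hfe⟩
    exact ⟨hP, hfe⟩

lemma disag_swap {V E : Type*} {ε : E → Sym2 V} (_hloopless : ∀ e : E, ¬ (ε e).IsDiag)
    (D D' : GraphOrientation V E ε) (e : E) (h : D'.head e ≠ D.head e) :
    D'.head e = D.tail e ∧ D'.tail e = D.head e := by
  have hcomp : s(D.tail e, D.head e) = s(D'.tail e, D'.head e) :=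
    (D.compat e).symm.trans (D'.compat e)
  rw [Sym2.eq_iff] at hcomp
  rcases hcomp with ⟨h1, h2⟩ | ⟨h1, h2⟩
  · exact absurd h2.symm h
  · exact ⟨h1.symm, h2.symm⟩

lemma ite_comm_eq {α : Type*} [DecidableEq α] (a b : α) :
    (if a = b then (1:ℤ) else 0) = (if b = a then 1 else 0) := by
  by_cases h : a = b <;> simp [h, eq_comm]

/-- Theorem of Borradaile et al.: an orientation of a loopless multigraph is
decreasingly minimal iff there is no dipath from a node `s` to a node `t` with
`ρ(t) ≥ ρ(s) + 2`. -/
theorem stmt18 {V E : Type*} [Fintype V] [Fintype E] [DecidableEq V]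
    (ε : E → Sym2 V) (hloopless : ∀ e : E, ¬ (ε e).IsDiag)
    (D : GraphOrientation V E ε) :
    (∀ D' : GraphOrientation V E ε, DecLE (indeg D) (indeg D')) ↔
      ¬ ∃ s t : V, Reach D s t ∧ indeg D s + 2 ≤ indeg D t := by
  classical
  constructor
  · -- decreasingly minimal → no improving path
    intro hmin
    rintro ⟨s, t, hreach, h2⟩
    have hst : s ≠ t := by
      rintro rfl
      omega
    obtain ⟨L0, hT0, hE0, -⟩ := exists_trail (P := fun _ : E => True)
      (T := D.tail) (H := D.head)
      (fun u v h => by obtain ⟨e, h1, h2⟩ := h; exact ⟨e, trivial, h1, h2⟩) hreach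
    obtain ⟨L, hN, hT, hE', -⟩ :=
      exists_nodup_trail L0.length L0 le_rfl s hT0 (fun e _ => trivial)
    have hEt : endOf D.head s L = t := hE'.trans hE0
    set D' := flipO D L with hD'
    have hx' : ∀ v, indeg D' v
        = indeg D v + (if v = s then 1 else 0) - (if v = t then 1 else 0) := by
      intro v
      rw [hD', indeg_flip D L hN v]
      have htc := trail_count L s hT v
      rw [hEt, ite_comm_eq s v, ite_comm_eq t v] at htc
      omega
    have hlex := exch_lex hst hx' h2
    rcases hmin D' with heq | hlt
    · rw [heq] at hlex
      exact (Std.Asymm.asymm _ _ hlex) hlex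
    · exact (Std.Asymm.asymm _ _ hlt) hlex
  · -- no improving path → decreasingly minimal
    intro hno
    have hno' : ∀ s t : V, Reach D s t → indeg D t ≤ indeg D s + 1 := by
      intro s t h
      by_contra hc
      exact hno ⟨s, t, h, by omega⟩
    have key : ∀ n : ℕ, ∀ D' : GraphOrientation V E ε,
        (Finset.univ.filter (fun e => D'.head e ≠ D.head e)).card = n →
        DecLE (indeg D) (indeg D') := by
      intro n
      induction n using Nat.strong_induction_on with
      | _ n ih =>
        intro D' hcard
        by_cases heqf : ∀ v, indeg D v = indeg D' v
        · exact Or.inl (congrArg sortedDesc (funext heqf))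
        · push_neg at heqf
          obtain ⟨v₀, hv₀⟩ := heqf
          set d : V → ℤ := fun u => indeg D u - indeg D' u with hdd
          have hsum : ∑ u : V, d u = 0 := by
            simp only [hdd]
            rw [Finset.sum_sub_distrib, sum_indeg D, sum_indeg D']
            ring
          have ht0ex : ∃ t0 : V, 0 < d t0 := by
            by_contra hcon
            push_neg at hcon
            have := (Finset.sum_eq_zero_iff_of_nonpos (fun i _ => hcon i)).1 hsum v₀
              (Finset.mem_univ v₀)
            simp only [hdd] at this
            exact hv₀ (by omega)
          obtain ⟨t0, ht0⟩ := ht0ex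
          set rF : V → V → Prop := fun u v =>
            ∃ e : E, (D'.head e ≠ D.head e) ∧ D.tail e = u ∧ D.head e = v with hrF
          set R : Finset V := Finset.univ.filter (fun u => Relation.ReflTransGen rF u t0)
            with hRdef
          have hd : ∀ u : V, d u =
              ((Finset.univ.filter (fun e => (D'.head e ≠ D.head e) ∧ D.head e = u)).card : ℤ)
              - ((Finset.univ.filter
                  (fun e => (D'.head e ≠ D.head e) ∧ D.tail e = u)).card : ℤ) := by
            intro u
            have hsplit' : Finset.univ.filter (fun e => D'.head e = u)
                = Finset.univ.filter (fun e => (D'.head e ≠ D.head e) ∧ D.tail e = u)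
                  ∪ Finset.univ.filter (fun e => ¬(D'.head e ≠ D.head e) ∧ D.head e = u) := by
              ext e
              simp only [Finset.mem_filter, Finset.mem_union, Finset.mem_univ, true_and]
              by_cases hdis : D'.head e ≠ D.head e
              · have hsw := disag_swap hloopless D D' e hdis
                constructor
                · intro h
                  exact Or.inl ⟨hdis, by rw [← hsw.1]; exact h⟩
                · rintro (⟨-, h⟩ | ⟨hnd, -⟩)
                  · rw [hsw.1]
                    exact h
                  · exact absurd hdis hnd
              · push_neg at hdis
                rw [hdis]
                tauto
            have hsplit : Finset.univ.filter (fun e => D.head e = u)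
                = Finset.univ.filter (fun e => (D'.head e ≠ D.head e) ∧ D.head e = u)
                  ∪ Finset.univ.filter (fun e => ¬(D'.head e ≠ D.head e) ∧ D.head e = u) := by
              ext e
              simp only [Finset.mem_filter, Finset.mem_union, Finset.mem_univ, true_and]
              tauto
            have c1 : indeg D' u
                = ((Finset.univ.filter
                    (fun e => (D'.head e ≠ D.head e) ∧ D.tail e = u)).card : ℤ)
                  + ((Finset.univ.filter
                    (fun e => ¬(D'.head e ≠ D.head e) ∧ D.head e = u)).card : ℤ) := by
              rw [indeg, hsplit', Finset.card_union_of_disjoint]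
              · push_cast
                ring
              · rw [Finset.disjoint_filter]
                intro e _ hre
                tauto
            have c2 : indeg D u
                = ((Finset.univ.filter
                    (fun e => (D'.head e ≠ D.head e) ∧ D.head e = u)).card : ℤ)
                  + ((Finset.univ.filter
                    (fun e => ¬(D'.head e ≠ D.head e) ∧ D.head e = u)).card : ℤ) := by
              rw [indeg, hsplit, Finset.card_union_of_disjoint]
              · push_cast
                ring
              · rw [Finset.disjoint_filter]
                intro e _ hre
                tauto
            simp only [hdd]
            rw [c1, c2]
            ring
          have hsumR : ∑ u ∈ R, d u ≤ 0 := by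
            have h1 : ∑ u ∈ R, d u
                = ((Finset.univ.filter
                    (fun e => (D'.head e ≠ D.head e) ∧ D.head e ∈ R)).card : ℤ)
                  - ((Finset.univ.filter
                    (fun e => (D'.head e ≠ D.head e) ∧ D.tail e ∈ R)).card : ℤ) := by
              rw [Finset.sum_congr rfl (fun u _ => hd u), Finset.sum_sub_distrib,
                ← Nat.cast_sum, ← Nat.cast_sum,
                sum_card_fiber (fun e => D'.head e ≠ D.head e) D.head R,
                sum_card_fiber (fun e => D'.head e ≠ D.head e) D.tail R]
            rw [h1]
            have hsubset : Finset.univ.filter (fun e => (D'.head e ≠ D.head e) ∧ D.head e ∈ R)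
                ⊆ Finset.univ.filter
                  (fun e => (D'.head e ≠ D.head e) ∧ D.tail e ∈ R) := by
              intro e he
              simp only [Finset.mem_filter, Finset.mem_univ, true_and, hRdef] at he ⊢
              refine ⟨he.1, ?_⟩
              have hstep : rF (D.tail e) (D.head e) := ⟨e, he.1, rfl, rfl⟩
              exact Relation.ReflTransGen.head hstep he.2
            have := Finset.card_le_card hsubset
            have := (Nat.cast_le (α := ℤ)).2 this
            omega
          have ht0R : t0 ∈ R :=
            Finset.mem_filter.2 ⟨Finset.mem_univ _, Relation.ReflTransGen.refl⟩
          have hs0ex : ∃ s0 ∈ R, d s0 < 0 := by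
            by_contra hcon
            push_neg at hcon
            have := Finset.single_le_sum (fun i hi => hcon i hi) ht0R
            omega
          obtain ⟨s0, hs0R, hs0⟩ := hs0ex
          have hs0t0 : s0 ≠ t0 := by
            intro h
            rw [h] at hs0
            omega
          have hRF : Relation.ReflTransGen rF s0 t0 := (Finset.mem_filter.1 hs0R).2
          obtain ⟨L0, hT0, hE0, hP0⟩ := exists_trail
            (P := fun e => D'.head e ≠ D.head e) (T := D.tail) (H := D.head)
            (fun u v h => h) hRF
          obtain ⟨L, hN, hT, hE', hP⟩ := exists_nodup_trail L0.length L0 le_rfl s0 hT0 hP0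
          have hEt : endOf D.head s0 L = t0 := hE'.trans hE0
          have hLne : L ≠ [] := by
            intro h
            rw [h] at hEt
            exact hs0t0 hEt
          set D'' := flipO D' L with hD''
          have hx'' : ∀ v, indeg D'' v
              = indeg D' v + (if v = t0 then 1 else 0) - (if v = s0 then 1 else 0) := by
            intro v
            rw [hD'', indeg_flip D' L hN v]
            have hfil1 : L.filter (fun e => D'.tail e = v) = L.filter (fun e => D.head e = v) := by
              apply List.filter_congr
              intro e he
              have hsw := (disag_swap hloopless D D' e (hP e he)).2
              simp [hsw]
            have hfil2 : L.filter (fun e => D'.head e = v) = L.filter (fun e => D.tail e = v) := by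
              apply List.filter_congr
              intro e he
              have hsw := (disag_swap hloopless D D' e (hP e he)).1
              simp [hsw]
            have htc := trail_count L s0 hT v
            rw [hEt, ite_comm_eq s0 v, ite_comm_eq t0 v] at htc
            rw [hfil1, hfil2]
            omega
          have hhead'' : ∀ e : E, D''.head e = if e ∈ L then D'.tail e else D'.head e :=
            fun e => rfl
          have hlt_card : (Finset.univ.filter (fun e => D''.head e ≠ D.head e)).card < n := by
            rw [← hcard]
            apply Finset.card_lt_card
            rw [Finset.ssubset_iff_of_subset]
            · obtain ⟨e₀, he₀⟩ := List.exists_mem_of_ne_nil L hLne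
              refine ⟨e₀, ?_, ?_⟩
              · exact Finset.mem_filter.2 ⟨Finset.mem_univ _, hP e₀ he₀⟩
              · intro hmem
                have : D''.head e₀ = D.head e₀ := by
                  rw [hhead'', if_pos he₀, (disag_swap hloopless D D' e₀ (hP e₀ he₀)).2]
                exact (Finset.mem_filter.1 hmem).2 this
            · intro e he
              simp only [Finset.mem_filter, Finset.mem_univ, true_and] at he ⊢
              rw [hhead''] at he
              by_cases hmem : e ∈ L
              · rw [if_pos hmem, (disag_swap hloopless D D' e (hP e hmem)).2] at he
                exact absurd rfl he
              · rw [if_neg hmem] at he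
                exact he
          have hIH : DecLE (indeg D) (indeg D'') := ih _ hlt_card D'' rfl
          have hreach0 : Reach D s0 t0 := Relation.ReflTransGen.mono (r := rF)
            (p := fun u v => ∃ e : E, D.tail e = u ∧ D.head e = v)
            (fun u v h => by obtain ⟨e, _, h1, h2⟩ := h; exact ⟨e, h1, h2⟩) s0 t0 hRF
          have hub := hno' s0 t0 hreach0
          have hb : indeg D' t0 + 1 ≤ indeg D' s0 := by
            simp only [hdd] at ht0 hs0
            omega
          have hstep2 : DecLE (indeg D'') (indeg D') := by
            by_cases hcase : indeg D' s0 = indeg D' t0 + 1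
            · left
              have hfun : indeg D'' = indeg D' ∘ (Equiv.swap t0 s0) := by
                funext v
                by_cases h1 : v = t0
                · have hsw : (Equiv.swap t0 s0) v = s0 := by rw [h1, Equiv.swap_apply_left]
                  rw [hx'', if_pos h1, if_neg (show v ≠ s0 by rw [h1]; exact Ne.symm hs0t0)]
                  simp only [Function.comp_apply, hsw]
                  rw [h1]
                  omega
                · by_cases h2 : v = s0
                  · have hsw : (Equiv.swap t0 s0) v = t0 := by rw [h2, Equiv.swap_apply_right]
                    rw [hx'', if_neg h1, if_pos h2]
                    simp only [Function.comp_apply, hsw]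
                    rw [h2]
                    omega
                  · have hsw : (Equiv.swap t0 s0) v = v := Equiv.swap_apply_of_ne_of_ne h1 h2
                    rw [hx'', if_neg h1, if_neg h2]
                    simp only [Function.comp_apply, hsw]
                    ring
              rw [hfun, sortedDesc_comp_perm]
            · right
              exact exch_lex (Ne.symm hs0t0) hx'' (by omega)
          exact decLE_trans hIH hstep2
    intro D'
    exact key _ D' rfl
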